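/- Let g : A → C be a ring homomorphism and J' an ideal of C such that the annihilator of J' in the ring g(A) + J' is zero. Then there is an isomorphism of A-modules Hom_{A ⋈^g J'}(A, A ⋈^g J') ≅ g⁻¹(J') × 0, where A is regarded as an A ⋈^g J'-module via the surjection A ⋈^g J' → A, (a, g(a)+j') ↦ a, and g⁻¹(J') × 0 = {(a,0) : a ∈ g⁻¹(J')} is an ideal of A ⋈^g J'. -/

import Mathlib

variable {A C : Type} [CommRing A] [CommRing C]

/-- The amalgamation `A ⋈^g J' = {(a, g a + j') : a ∈ A, j' ∈ J'}` of `A` and `C` along the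
ideal `J'` with respect to the ring homomorphism `g`, as a subring of `A × C`. -/
def Amalg (g : A →+* C) (J' : Ideal C) : Subring (A × C) where
  carrier := {x | ∃ a : A, ∃ j ∈ J', x = (a, g a + j)}
  zero_mem' := ⟨0, 0, J'.zero_mem, by simp <;> rfl⟩
  one_mem' := ⟨1, 0, J'.zero_mem, by simp <;> rfl⟩
  add_mem' := by
    rintro x y ⟨a, j, hj, rfl⟩ ⟨b, k, hk, rfl⟩
    exact ⟨a + b, j + k, J'.add_mem hj hk, by
      simp only [Prod.mk_add_mk, map_add, Prod.mk.injEq]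
      exact ⟨trivial, by ring⟩⟩
  neg_mem' := by
    rintro x ⟨a, j, hj, rfl⟩
    exact ⟨-a, -j, J'.neg_mem hj, by
      simp only [Prod.neg_mk, map_neg, Prod.mk.injEq]
      exact ⟨trivial, by ring⟩⟩
  mul_mem' := by
    rintro x y ⟨a, j, hj, rfl⟩ ⟨b, k, hk, rfl⟩
    exact ⟨a * b, g a * k + j * g b + j * k,
      J'.add_mem (J'.add_mem (J'.mul_mem_left _ hk) (J'.mul_mem_right _ hj))
        (J'.mul_mem_right _ hj), by
      simp only [Prod.mk_mul_mk, map_mul, Prod.mk.injEq]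
      exact ⟨trivial, by ring⟩⟩

/-- The canonical ring homomorphism `A → A ⋈^g J'`, `a ↦ (a, g a)`. -/
def Amalg.incl (g : A →+* C) (J' : Ideal C) : A →+* Amalg g J' where
  toFun a := ⟨(a, g a), a, 0, J'.zero_mem, by simp⟩
  map_one' := Subtype.ext (by simp)
  map_mul' x y := Subtype.ext (by simp [Prod.mk_mul_mk])
  map_zero' := Subtype.ext (by simp)
  map_add' x y := Subtype.ext (by simp [Prod.mk_add_mk])

/-- The projection `A ⋈^g J' → A`, `(a, g a + j') ↦ a`; it is surjective
with kernel `0 × J'`. -/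
def Amalg.proj (g : A →+* C) (J' : Ideal C) : Amalg g J' →+* A :=
  (RingHom.fst A C).comp (Amalg g J').subtype

/-- The ideal `g⁻¹(J') × 0 = {(a, 0) : a ∈ g⁻¹(J')}` of `A ⋈^g J'`. -/
def Amalg.idealComap (g : A →+* C) (J' : Ideal C) : Ideal (Amalg g J') where
  carrier := {x | ∃ a ∈ J'.comap g, (x : A × C) = (a, 0)}
  zero_mem' := ⟨0, (J'.comap g).zero_mem, by simp <;> rfl⟩
  add_mem' := by
    rintro x y ⟨a, ha, hx⟩ ⟨b, hb, hy⟩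
    refine ⟨a + b, (J'.comap g).add_mem ha hb, ?_⟩
    have : ((x + y : Amalg g J') : A × C) = (x : A × C) + (y : A × C) := rfl
    rw [this, hx, hy]
    simp
  smul_mem' := by
    rintro c x ⟨a, ha, hx⟩
    refine ⟨(c : A × C).1 * a, (J'.comap g).mul_mem_left _ ha, ?_⟩
    have : ((c • x : Amalg g J') : A × C) = (c : A × C) * (x : A × C) := rfl
    rw [this, hx]
    simp [Prod.ext_iff]

set_option synthInstance.maxHeartbeats 1000000 in
set_option maxHeartbeats 1000000 in
theorem amalg_hom_iso (g : A →+* C) (J' : Ideal C)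
    (hann : ∀ (a : A) (j' : C), j' ∈ J' → (∀ y ∈ J', (g a + j') * y = 0) → g a + j' = 0) :
    letI : Module (Amalg g J') A := Module.compHom _ (Amalg.proj g J')
    letI : Module A (A →ₗ[Amalg g J'] Amalg g J') := Module.compHom _ (Amalg.incl g J')
    letI : Module A (Amalg.idealComap g J') := Module.compHom _ (Amalg.incl g J')
    Nonempty ((A →ₗ[Amalg g J'] Amalg g J') ≃ₗ[A] Amalg.idealComap g J') := by
  letI : Module (Amalg g J') A := Module.compHom _ (Amalg.proj g J')
  letI : Module A (A →ₗ[Amalg g J'] Amalg g J') := Module.compHom _ (Amalg.incl g J')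
  letI : Module A (Amalg.idealComap g J') := Module.compHom _ (Amalg.incl g J')
  have smul_def : ∀ (r : Amalg g J') (a : A), r • a = (r : A × C).1 * a := fun r a => rfl
  have mul_val : ∀ (u v : Amalg g J'), ((u * v : Amalg g J') : A × C) = (u : A × C) * (v : A × C) :=
    fun _ _ => rfl
  have incl_val : ∀ a : A, ((Amalg.incl g J' a : Amalg g J') : A × C) = (a, g a) := fun _ => rfl
  have mem1 : ∀ f : A →ₗ[Amalg g J'] Amalg g J', f 1 ∈ Amalg.idealComap g J' := by
    intro f
    obtain ⟨a, j, hj, hfa⟩ := (f 1).2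
    have hz : g a + j = 0 := by
      apply hann a j hj
      intro y hy
      have hyR : ((0, y) : A × C) ∈ Amalg g J' := ⟨0, y, hy, by simp⟩
      have h1 : (⟨(0, y), hyR⟩ : Amalg g J') • (1 : A) = 0 := by
        rw [smul_def]; simp
      have h2 : f ((⟨(0, y), hyR⟩ : Amalg g J') • (1 : A)) = (⟨(0, y), hyR⟩ : Amalg g J') * f 1 :=
        f.map_smul _ _
      rw [h1, map_zero] at h2
      have h3 := congrArg (fun z : Amalg g J' => (z : A × C).2) h2.symm
      simp only [mul_val, hfa, Prod.snd_mul, ZeroMemClass.coe_zero, Prod.snd_zero] at h3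
      rw [mul_comm] at h3
      exact h3
    refine ⟨a, ?_, ?_⟩
    · show g a ∈ J'
      have : g a = -j := by linear_combination hz
      rw [this]; exact J'.neg_mem hj
    · rw [hfa, hz]
  have keysmul : ∀ (x : Amalg.idealComap g J') (r : Amalg g J') (a : A),
      Amalg.incl g J' (r • a) * (x : Amalg g J') = r * (Amalg.incl g J' a * (x : Amalg g J')) := by
    rintro ⟨x, c, hc, hx⟩ r a
    apply Subtype.ext
    rw [mul_val, mul_val, mul_val, smul_def, incl_val, incl_val, hx]
    obtain ⟨b, j, hj, hr⟩ := r.2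
    rw [hr]
    simp [Prod.ext_iff]
    ring
  refine ⟨{
    toFun := fun f => ⟨f 1, mem1 f⟩
    map_add' := fun f f' => rfl
    map_smul' := fun a f => rfl
    invFun := fun x =>
      { toFun := fun a => Amalg.incl g J' a * (x : Amalg g J')
        map_add' := fun a b => by simp only [map_add, add_mul]
        map_smul' := fun r a => keysmul x r a }
    left_inv := fun f => by
      refine LinearMap.ext fun a => ?_
      show Amalg.incl g J' a * f 1 = f a
      have := (f.map_smul (Amalg.incl g J' a) 1).symm
      rw [smul_def] at this
      simpa [incl_val] using this
    right_inv := fun x => by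
      apply Subtype.ext
      show Amalg.incl g J' 1 * (x : Amalg g J') = (x : Amalg g J')
      rw [map_one, one_mul] }⟩
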